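/- For Lebesgue-almost every irrational x ∈ (0,1), the averages of its continued fraction partial quotients tend to infinity: lim_{n→∞} (1/n)(a_1(x) + ⋯ + a_n(x)) = +∞. -/

import Mathlib

open Filter MeasureTheory Topology
open scoped Classical

noncomputable def gaussMap (x : ℝ) : ℝ := Int.fract x⁻¹

noncomputable def cfa : ℕ → ℝ → ℕ
  | 0, x => ⌊x⁻¹⌋₊
  | n + 1, x => cfa n (gaussMap x)

namespace CFAux

/-- good set: irrationals in (0,1) -/
def G : Set ℝ := {x | Irrational x ∧ x ∈ Set.Ioo 0 1}

lemma irr_inv {x : ℝ} (h : Irrational x) : Irrational x⁻¹ := by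
  rcases eq_or_ne x 0 with rfl | hx
  · simpa using h
  · intro ⟨q, hq⟩
    exact h ⟨q⁻¹, by rw [Rat.cast_inv, hq, inv_inv]⟩


lemma gauss_mem_G {x : ℝ} (hx : x ∈ G) : gaussMap x ∈ G := by
  obtain ⟨hirr, h0, h1⟩ := hx
  have hinv : Irrational x⁻¹ := irr_inv hirr
  have hfrac : Irrational (gaussMap x) := by
    have h2 := hinv.sub_intCast ⌊x⁻¹⌋
    show Irrational (x⁻¹ - ↑⌊x⁻¹⌋)
    exact h2
  refine ⟨hfrac, (Int.fract_nonneg _).lt_of_ne ?_, Int.fract_lt_one _⟩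
  intro h
  exact hfrac ⟨0, by rw [Rat.cast_zero]; exact h⟩

lemma one_lt_inv_of_G {x : ℝ} (hx : x ∈ G) : 1 < x⁻¹ :=
  (one_lt_inv₀ hx.2.1).mpr hx.2.2

lemma one_le_cfa {x : ℝ} (hx : x ∈ G) (i : ℕ) : 1 ≤ cfa i x := by
  induction i generalizing x with
  | zero =>
      show 1 ≤ ⌊x⁻¹⌋₊
      exact Nat.le_floor (by exact_mod_cast (one_lt_inv_of_G hx).le)
  | succ n ih => exact ih (gauss_mem_G hx)

lemma cfa_succ (n : ℕ) (x : ℝ) : cfa (n+1) x = cfa n (gaussMap x) := rfl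

lemma cfa_eq_iterate (i : ℕ) (x : ℝ) : cfa i x = ⌊(gaussMap^[i] x)⁻¹⌋₊ := by
  induction i generalizing x with
  | zero => rfl
  | succ n ih => rw [cfa_succ, ih, Function.iterate_succ_apply]

lemma iterate_mem_G {x : ℝ} (hx : x ∈ G) (i : ℕ) : gaussMap^[i] x ∈ G := by
  induction i generalizing x with
  | zero => exact hx
  | succ n ih => rw [Function.iterate_succ_apply]; exact ih (gauss_mem_G hx)

lemma measurable_gaussMap : Measurable gaussMap :=
  measurable_fract.comp measurable_inv

lemma measurable_cfa (i : ℕ) : Measurable (cfa i) := by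
  induction i with
  | zero => exact measurable_inv.nat_floor
  | succ n ih => exact ih.comp measurable_gaussMap

/-- the inverse branch map -/
noncomputable def phi (a : ℕ) (t : ℝ) : ℝ := ((a : ℝ) + t)⁻¹

lemma phi_mem_Icc {a : ℕ} (ha : 1 ≤ a) {t : ℝ} (ht : t ∈ Set.Icc (0:ℝ) 1) :
    phi a t ∈ Set.Icc (0:ℝ) 1 := by
  have h1 : (1:ℝ) ≤ (a:ℝ) + t := by
    have : (1:ℝ) ≤ (a:ℝ) := by exact_mod_cast ha
    linarith [ht.1]
  have h0 : (0:ℝ) < (a:ℝ) + t := lt_of_lt_of_le one_pos h1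
  exact ⟨le_of_lt (by rw [phi]; positivity), by rw [phi]; exact inv_le_one_of_one_le₀ h1⟩

end CFAux

namespace CFAux2
open CFAux

/-- matrix entries (A,B,C,D) so that the composed inverse-branch map is t ↦ (A t + B)/(C t + D) -/
def mat : List ℕ → ℕ × ℕ × ℕ × ℕ
  | [] => (1, 0, 0, 1)
  | a :: l =>
      let m := mat l
      (m.2.2.1, m.2.2.2, m.1 + a * m.2.2.1, m.2.1 + a * m.2.2.2)

noncomputable def hMap : List ℕ → ℝ → ℝ
  | [], t => t
  | a :: l, t => phi a (hMap l t)

def goodList (l : List ℕ) : Prop := ∀ a ∈ l, 1 ≤ a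

lemma one_le_mD {l : List ℕ} (hl : goodList l) : 1 ≤ (mat l).2.2.2 := by
  induction l with
  | nil => simp [mat]
  | cons a l ih =>
      have ha : 1 ≤ a := hl a List.mem_cons_self
      have : 1 ≤ (mat l).2.2.2 := ih (fun b hb => hl b (List.mem_cons_of_mem _ hb))
      simp only [mat]
      calc 1 ≤ a * (mat l).2.2.2 := Nat.one_le_iff_ne_zero.mpr (by positivity)
      _ ≤ (mat l).2.1 + a * (mat l).2.2.2 := Nat.le_add_left _ _

lemma denom_pos {l : List ℕ} (hl : goodList l) {t : ℝ} (ht : 0 ≤ t) :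
    0 < ((mat l).2.2.1 : ℝ) * t + (mat l).2.2.2 := by
  have h1 : (1:ℝ) ≤ ((mat l).2.2.2 : ℝ) := by exact_mod_cast one_le_mD hl
  have h2 : (0:ℝ) ≤ ((mat l).2.2.1 : ℝ) * t := by positivity
  linarith

lemma hMap_eq {l : List ℕ} (hl : goodList l) {t : ℝ} (ht : 0 ≤ t) :
    hMap l t = (((mat l).1 : ℝ) * t + (mat l).2.1) / (((mat l).2.2.1 : ℝ) * t + (mat l).2.2.2) := by
  induction l with
  | nil => simp [hMap, mat]
  | cons a l ih =>
      have hl' : goodList l := fun b hb => hl b (List.mem_cons_of_mem _ hb)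
      have hd := denom_pos hl' ht
      rw [hMap, ih hl', phi]
      have key : (a:ℝ) + (((mat l).1 : ℝ) * t + (mat l).2.1) / (((mat l).2.2.1 : ℝ) * t + (mat l).2.2.2)
          = ((((mat l).1 + a * (mat l).2.2.1 : ℕ) : ℝ) * t + ((mat l).2.1 + a * (mat l).2.2.2 : ℕ)) /
            (((mat l).2.2.1 : ℝ) * t + (mat l).2.2.2) := by
        push_cast
        rw [add_div' _ _ _ (ne_of_gt hd)]
        ring
      rw [key, inv_div]
      simp only [mat]

lemma det_mat (l : List ℕ) :
    ((mat l).1 : ℤ) * (mat l).2.2.2 - (mat l).2.1 * (mat l).2.2.1 = (-1) ^ l.length := by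
  induction l with
  | nil => simp [mat]
  | cons a l ih =>
      simp only [mat, List.length_cons]
      push_cast
      push_cast at ih
      ring_nf
      ring_nf at ih
      nlinarith [ih]

end CFAux2

namespace CFAux3
open CFAux CFAux2

lemma det_real (l : List ℕ) :
    |((mat l).1 : ℝ) * (mat l).2.2.2 - ((mat l).2.1 : ℝ) * (mat l).2.2.1| = 1 := by
  have h := det_mat l
  have : (((mat l).1 : ℤ) * (mat l).2.2.2 - (mat l).2.1 * (mat l).2.2.1 : ℤ) = (-1)^l.length := h
  have h2 : ((mat l).1 : ℝ) * (mat l).2.2.2 - ((mat l).2.1 : ℝ) * (mat l).2.2.1 = ((-1:ℝ))^l.length := by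
    exact_mod_cast congrArg (fun z : ℤ => (z : ℝ)) this
  rw [h2, abs_pow, abs_neg, abs_one, one_pow]

/-- interval length formula -/
lemma hMap_sub {l : List ℕ} (hl : goodList l) {u v : ℝ} (hu : 0 ≤ u) (hv : 0 ≤ v) :
    |hMap l u - hMap l v| =
      |u - v| / ((((mat l).2.2.1 : ℝ) * u + (mat l).2.2.2) * (((mat l).2.2.1 : ℝ) * v + (mat l).2.2.2)) := by
  have du := denom_pos hl hu
  have dv := denom_pos hl hv
  rw [hMap_eq hl hu, hMap_eq hl hv, div_sub_div _ _ (ne_of_gt du) (ne_of_gt dv)]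
  rw [abs_div, abs_of_pos (mul_pos du dv)]
  congr 1
  have : (((mat l).1:ℝ) * u + (mat l).2.1) * (((mat l).2.2.1:ℝ) * v + (mat l).2.2.2) -
      (((mat l).2.2.1:ℝ) * u + (mat l).2.2.2) * (((mat l).1:ℝ) * v + (mat l).2.1)
      = (((mat l).1:ℝ) * (mat l).2.2.2 - ((mat l).2.1:ℝ) * (mat l).2.2.1) * (u - v) := by ring
  rw [this, abs_mul, det_real, one_mul]

lemma hMap_mem_Icc {l : List ℕ} (hl : goodList l) {t : ℝ} (ht : t ∈ Set.Icc (0:ℝ) 1) :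
    hMap l t ∈ Set.Icc (0:ℝ) 1 := by
  induction l with
  | nil => exact ht
  | cons a l ih =>
      exact phi_mem_Icc (hl a List.mem_cons_self)
        (ih (fun b hb => hl b (List.mem_cons_of_mem _ hb)))

/-- single-branch coding lemma -/
lemma branch_eq {a : ℕ} (ha : 1 ≤ a) {E : Set ℝ} (hE : E ⊆ G) :
    {x | x ∈ G ∧ cfa 0 x = a ∧ gaussMap x ∈ E} = phi a '' E := by
  ext x
  constructor
  · rintro ⟨hxG, hcfa, hgE⟩
    refine ⟨gaussMap x, hgE, ?_⟩
    have hx0 : 0 < x := hxG.2.1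
    have h1 : (⌊x⁻¹⌋ : ℝ) = (a : ℝ) := by
      have hpos : (0:ℝ) ≤ x⁻¹ := (inv_pos.mpr hx0).le
      have : ⌊x⁻¹⌋ = (⌊x⁻¹⌋₊ : ℤ) := (Int.floor_toNat x⁻¹) ▸ by
        rw [Int.toNat_of_nonneg (Int.floor_nonneg.mpr hpos)]
      rw [this]
      exact_mod_cast congrArg (fun n : ℕ => (n:ℝ)) hcfa
    have : gaussMap x = x⁻¹ - a := by
      rw [gaussMap, Int.fract, h1]
    rw [phi, this]
    have h3 : (a:ℝ) + (x⁻¹ - a) = x⁻¹ := by ring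
    rw [h3, inv_inv]
  · rintro ⟨t, htE, rfl⟩
    have htG : t ∈ G := hE htE
    have ht0 : 0 < t := htG.2.1
    have ht1 : t < 1 := htG.2.2
    have hat : (1:ℝ) ≤ (a:ℝ) := by exact_mod_cast ha
    have hsum : (1:ℝ) < (a:ℝ) + t := by linarith
    have hsumpos : (0:ℝ) < (a:ℝ) + t := by linarith
    have hxval : (phi a t)⁻¹ = (a:ℝ) + t := by rw [phi, inv_inv]
    have hxG : phi a t ∈ G := by
      refine ⟨?_, inv_pos.mpr hsumpos, ?_⟩
      · have : Irrational ((a:ℝ) + t) := by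
          have := htG.1.intCast_add (a : ℤ)
          simpa using this
        exact irr_inv this
      · rw [phi]; exact inv_lt_one_of_one_lt₀ hsum
    refine ⟨hxG, ?_, ?_⟩
    · show ⌊(phi a t)⁻¹⌋₊ = a
      rw [hxval]
      rw [Nat.floor_eq_iff (by positivity)]
      constructor
      · linarith
      · push_cast; linarith
    · show Int.fract (phi a t)⁻¹ ∈ _
      rw [hxval]
      have : Int.fract ((a:ℝ) + t) = t := by
        rw [show ((a:ℝ) + t) = ((a:ℤ):ℝ) + t by push_cast; ring, Int.fract_intCast_add,
          Int.fract_eq_self.mpr ⟨ht0.le, ht1⟩]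
      rw [this]; exact htE

/-- image of unordered open interval of irrationals under a branch -/
lemma branch_image {a : ℕ} (ha : 1 ≤ a) {u v : ℝ} (hu : u ∈ Set.Icc (0:ℝ) 1) (hv : v ∈ Set.Icc (0:ℝ) 1) :
    phi a '' ({x | Irrational x} ∩ Set.uIoo u v) =
      {x | Irrational x} ∩ Set.uIoo (phi a u) (phi a v) := by
  have key : ∀ u v : ℝ, u ∈ Set.Icc (0:ℝ) 1 → v ∈ Set.Icc (0:ℝ) 1 → u ≤ v →
      phi a '' ({x | Irrational x} ∩ Set.Ioo u v) =
        {x | Irrational x} ∩ Set.Ioo (phi a v) (phi a u) := by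
    intro u v hu hv huv
    have hat : (1:ℝ) ≤ (a:ℝ) := by exact_mod_cast ha
    have hau : (0:ℝ) < (a:ℝ) + u := by linarith [hu.1]
    have hav : (0:ℝ) < (a:ℝ) + v := by linarith [hv.1]
    ext y
    constructor
    · rintro ⟨t, ⟨hti, ht1, ht2⟩, rfl⟩
      have hatt : (0:ℝ) < (a:ℝ) + t := by linarith
      refine ⟨?_, ?_, ?_⟩
      · show Irrational (phi a t)
        exact irr_inv (by simpa using hti.intCast_add (a:ℤ))
      · show phi a v < phi a t
        exact inv_strictAnti₀ hatt (by linarith)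
      · show phi a t < phi a u
        exact inv_strictAnti₀ hau (by linarith)
    · rintro ⟨hyi, hy1, hy2⟩
      have hpv : (0:ℝ) < phi a v := inv_pos.mpr hav
      have hy0 : (0:ℝ) < y := lt_trans hpv hy1
      have hyinv1 : (a:ℝ) + u < y⁻¹ := by
        have := inv_strictAnti₀ hy0 hy2
        rwa [phi, inv_inv] at this
      have hyinv2 : y⁻¹ < (a:ℝ) + v := by
        have := inv_strictAnti₀ hpv hy1
        rwa [phi, inv_inv] at this
      refine ⟨y⁻¹ - a, ⟨?_, by linarith, by linarith⟩, ?_⟩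
      · have : Irrational y⁻¹ := irr_inv hyi
        simpa using this.sub_intCast (a:ℤ)
      · rw [phi]
        have h3 : (a:ℝ) + (y⁻¹ - a) = y⁻¹ := by ring
        rw [h3, inv_inv]
  rcases le_total u v with h | h
  · rw [Set.uIoo_of_le h, Set.uIoo_comm, Set.uIoo_of_le]
    · exact key u v hu hv h
    · have hat : (1:ℝ) ≤ (a:ℝ) := by exact_mod_cast ha
      rw [phi, phi]
      apply inv_anti₀ (by linarith [hu.1])
      linarith
  · rw [Set.uIoo_comm, Set.uIoo_of_le h, Set.uIoo_of_le]
    · exact key v u hv hu h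
    · have hat : (1:ℝ) ≤ (a:ℝ) := by exact_mod_cast ha
      rw [phi, phi]
      apply inv_anti₀ (by linarith [hv.1])
      linarith

end CFAux3

namespace CFAux4
open CFAux CFAux2 CFAux3

noncomputable def qlist : ℕ → ℝ → List ℕ
  | 0, _ => []
  | n + 1, x => cfa 0 x :: qlist n (gaussMap x)

lemma qlist_length (n : ℕ) (x : ℝ) : (qlist n x).length = n := by
  induction n generalizing x with
  | zero => rfl
  | succ m ih => simp [qlist, ih]

lemma qlist_good {x : ℝ} (hx : x ∈ G) (n : ℕ) : goodList (qlist n x) := by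
  induction n generalizing x with
  | zero => intro a ha; simp [qlist] at ha
  | succ m ih =>
      intro a ha
      simp only [qlist, List.mem_cons] at ha
      rcases ha with rfl | ha
      · exact one_le_cfa hx 0
      · exact ih (gauss_mem_G hx) a ha

lemma qlist_take {x : ℝ} (j n : ℕ) (h : j ≤ n) : qlist j x = (qlist n x).take j := by
  induction n generalizing j x with
  | zero => interval_cases j; rfl
  | succ m ih =>
      cases j with
      | zero => rfl
      | succ k =>
          simp only [qlist, List.take_succ_cons]
          rw [ih k (Nat.succ_le_succ_iff.mp h)]

lemma cfa_of_qlist {x y : ℝ} {n j : ℕ} (hj : j < n) (h : qlist n x = qlist n y) :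
    cfa j x = cfa j y := by
  induction n generalizing j x y with
  | zero => omega
  | succ m ih =>
      simp only [qlist, List.cons.injEq] at h
      cases j with
      | zero => exact h.1
      | succ k =>
          show cfa k (gaussMap x) = cfa k (gaussMap y)
          exact ih (Nat.succ_lt_succ_iff.mp hj) h.2

/-- The key cylinder identity. -/
lemma cylinder_eq (l : List ℕ) (hl : goodList l) {u v : ℝ}
    (hu : u ∈ Set.Icc (0:ℝ) 1) (hv : v ∈ Set.Icc (0:ℝ) 1) :
    {x | x ∈ G ∧ qlist l.length x = l ∧ gaussMap^[l.length] x ∈ Set.uIoo u v}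
      = {x | Irrational x} ∩ Set.uIoo (hMap l u) (hMap l v) := by
  induction l generalizing u v with
  | nil =>
      ext x
      simp only [List.length_nil, Function.iterate_zero, id_eq, Set.mem_setOf_eq,
        Set.mem_inter_iff, hMap]
      constructor
      · rintro ⟨⟨hi, _⟩, _, hx⟩; exact ⟨hi, hx⟩
      · rintro ⟨hi, hx⟩
        have hsub : Set.uIoo u v ⊆ Set.Ioo (0:ℝ) 1 := by
          rw [Set.uIoo]
          intro z hz
          constructor
          · have : (0:ℝ) ≤ u ⊓ v := le_min hu.1 hv.1
            exact lt_of_le_of_lt this hz.1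
          · have : u ⊔ v ≤ 1 := max_le hu.2 hv.2
            exact lt_of_lt_of_le hz.2 this
        exact ⟨⟨hi, hsub hx⟩, rfl, hx⟩
  | cons a l ih =>
      have hl' : goodList l := fun b hb => hl b (List.mem_cons_of_mem _ hb)
      have ha : 1 ≤ a := hl a List.mem_cons_self
      have hstep : {x | x ∈ G ∧ qlist (a :: l).length x = a :: l ∧
            gaussMap^[(a :: l).length] x ∈ Set.uIoo u v}
          = {x | x ∈ G ∧ cfa 0 x = a ∧ gaussMap x ∈
              {y | y ∈ G ∧ qlist l.length y = l ∧ gaussMap^[l.length] y ∈ Set.uIoo u v}} := by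
        ext x
        simp only [Set.mem_setOf_eq, List.length_cons, qlist, List.cons.injEq,
          Function.iterate_succ_apply]
        constructor
        · rintro ⟨hxG, ⟨h1, h2⟩, h3⟩
          exact ⟨hxG, h1, gauss_mem_G hxG, h2, h3⟩
        · rintro ⟨hxG, h1, _, h2, h3⟩
          exact ⟨hxG, ⟨h1, h2⟩, h3⟩
      rw [hstep, ih hl' hu hv]
      have hEsub : {x | Irrational x} ∩ Set.uIoo (hMap l u) (hMap l v) ⊆ G := by
        rintro y ⟨hyi, hy⟩
        refine ⟨hyi, ?_⟩
        have h1 := hMap_mem_Icc hl' hu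
        have h2 := hMap_mem_Icc hl' hv
        rw [Set.uIoo] at hy
        constructor
        · exact lt_of_le_of_lt (le_min h1.1 h2.1) hy.1
        · exact lt_of_lt_of_le hy.2 (max_le h1.2 h2.2)
      rw [branch_eq ha hEsub, branch_image ha (hMap_mem_Icc hl' hu) (hMap_mem_Icc hl' hv)]
      rfl

end CFAux4

namespace CFAux5
open CFAux CFAux2 CFAux3 CFAux4

noncomputable def μ : Measure ℝ := volume.restrict (Set.Ioo (0:ℝ) 1)

instance : IsProbabilityMeasure μ := by
  constructor
  rw [μ, Measure.restrict_apply_univ, Real.volume_Ioo]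
  norm_num

lemma rat_null : μ {x : ℝ | ¬ Irrational x} = 0 := by
  have : {x : ℝ | ¬ Irrational x} = Set.range ((↑) : ℚ → ℝ) := by
    ext x; simp [Irrational]
  rw [this]
  have h : volume (Set.range ((↑) : ℚ → ℝ)) = 0 :=
    (Set.countable_range _).measure_zero _
  rw [μ, Measure.restrict_apply']
  · exact measure_mono_null Set.inter_subset_left h
  · exact measurableSet_Ioo

lemma ae_mem_G : ∀ᵐ x ∂μ, x ∈ G := by
  have h1 : ∀ᵐ x ∂μ, Irrational x := by
    rw [ae_iff]; exact rat_null
  have h2 : ∀ᵐ x ∂μ, x ∈ Set.Ioo (0:ℝ) 1 := ae_restrict_mem measurableSet_Ioo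
  filter_upwards [h1, h2] with x hx1 hx2
  exact ⟨hx1, hx2⟩

lemma G_compl_null : μ Gᶜ = 0 := by
  have := ae_mem_G
  rwa [ae_iff] at this

lemma fiber_measurable (n : ℕ) (l : List ℕ) : MeasurableSet {x : ℝ | qlist n x = l} := by
  induction n generalizing l with
  | zero =>
      by_cases h : l = []
      · subst h
        have : {x : ℝ | qlist 0 x = []} = Set.univ := by ext x; simp [qlist]
        rw [this]; exact MeasurableSet.univ
      · have : {x : ℝ | qlist 0 x = l} = ∅ := by
          ext x; simp only [qlist, Set.mem_setOf_eq, Set.mem_empty_iff_false, iff_false]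
          exact fun hh => h hh.symm
        rw [this]; exact MeasurableSet.empty
  | succ m ih =>
      cases l with
      | nil =>
          have : {x : ℝ | qlist (m+1) x = []} = ∅ := by ext x; simp [qlist]
          rw [this]; exact MeasurableSet.empty
      | cons a l' =>
          have : {x : ℝ | qlist (m+1) x = a :: l'} =
              (cfa 0) ⁻¹' {a} ∩ gaussMap ⁻¹' {y | qlist m y = l'} := by
            ext x; simp [qlist]
          rw [this]
          exact ((measurable_cfa 0) (measurableSet_singleton a)).inter
            (measurable_gaussMap (ih l'))

/-- measure of the set of irrationals in an unordered open interval -/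
lemma volume_irr_uIoo (u v : ℝ) :
    volume ({x : ℝ | Irrational x} ∩ Set.uIoo u v) = ENNReal.ofReal |v - u| := by
  have hae : ({x : ℝ | Irrational x} ∩ Set.uIoo u v : Set ℝ) =ᵐ[volume] Set.uIoo u v := by
    rw [Filter.eventuallyEq_set]
    have h : ∀ᵐ x : ℝ ∂volume, Irrational x := by
      rw [ae_iff]
      have : {x : ℝ | ¬ Irrational x} = Set.range ((↑) : ℚ → ℝ) := by
        ext x; simp [Irrational]
      rw [this]
      exact (Set.countable_range _).measure_zero _
    filter_upwards [h] with x hx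
    simp [hx]
  rw [measure_congr hae, Set.uIoo, Real.volume_Ioo]
  congr 1
  rcases le_total u v with h | h
  · rw [max_eq_right h, min_eq_left h, abs_of_nonneg (by linarith)]
  · rw [max_eq_left h, min_eq_right h, abs_of_nonpos (by linarith)]; ring

/-- μ of the cylinder-type sets -/
lemma mu_cylinder (l : List ℕ) (hl : goodList l) {u v : ℝ}
    (hu : u ∈ Set.Icc (0:ℝ) 1) (hv : v ∈ Set.Icc (0:ℝ) 1) :
    μ {x | x ∈ G ∧ qlist l.length x = l ∧ gaussMap^[l.length] x ∈ Set.uIoo u v}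
      = ENNReal.ofReal (|u - v| /
          ((((mat l).2.2.1 : ℝ) * u + (mat l).2.2.2) * (((mat l).2.2.1 : ℝ) * v + (mat l).2.2.2))) := by
  rw [cylinder_eq l hl hu hv]
  have h2 := hMap_mem_Icc hl hu
  have h3 := hMap_mem_Icc hl hv
  have hsub : {x : ℝ | Irrational x} ∩ Set.uIoo (hMap l u) (hMap l v) ⊆ Set.Ioo (0:ℝ) 1 := by
    rintro z ⟨hzi, hz⟩
    rw [Set.uIoo] at hz
    have hz0 : (0:ℝ) ≤ z := le_of_lt (lt_of_le_of_lt (le_min h2.1 h3.1) hz.1)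
    have hz1 : z ≤ 1 := le_of_lt (lt_of_lt_of_le hz.2 (max_le h2.2 h3.2))
    refine ⟨lt_of_le_of_ne hz0 ?_, lt_of_le_of_ne hz1 ?_⟩
    · intro hh; exact hzi ⟨0, by simp [← hh]⟩
    · intro hh; exact hzi ⟨1, by simp [hh]⟩
  have hmeas : μ ({x : ℝ | Irrational x} ∩ Set.uIoo (hMap l u) (hMap l v))
      = volume ({x : ℝ | Irrational x} ∩ Set.uIoo (hMap l u) (hMap l v)) := by
    rw [μ, Measure.restrict_apply']
    · congr 1
      exact Set.inter_eq_self_of_subset_left hsub |>.symm ▸ rfl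
    · exact measurableSet_Ioo
  rw [hmeas, volume_irr_uIoo, abs_sub_comm (hMap l v) (hMap l u), hMap_sub hl hu.1 hv.1]

end CFAux5

namespace CFAux6
open CFAux CFAux2 CFAux3 CFAux4 CFAux5

noncomputable def matF (i : ℕ) (x : ℝ) : ℕ × ℕ × ℕ × ℕ := mat (qlist i x)

lemma measurable_matF (i : ℕ) : Measurable (matF i) := by
  apply measurable_to_countable
  intro y
  have : matF i ⁻¹' {matF i y} = ⋃ l ∈ {l : List ℕ | mat l = matF i y}, {x | qlist i x = l} := by
    ext x
    simp only [Set.mem_preimage, Set.mem_singleton_iff, Set.mem_iUnion, Set.mem_setOf_eq, matF]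
    constructor
    · intro h; exact ⟨qlist i x, h, rfl⟩
    · rintro ⟨l, hl, rfl⟩; exact hl
  rw [this]
  exact MeasurableSet.biUnion (Set.to_countable _) (fun l _ => fiber_measurable i l)

noncomputable def Xf (K i : ℕ) (x : ℝ) : ℝ := if K ≤ cfa i x then 1 else 0

noncomputable def Yf (K i : ℕ) (x : ℝ) : ℝ :=
  ((K:ℝ)⁻¹ * (((matF i x).2.2.1 : ℝ) + ((matF i x).2.2.2 : ℝ))) /
    (((matF i x).2.2.1 : ℝ) * (K:ℝ)⁻¹ + ((matF i x).2.2.2 : ℝ))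

lemma measurable_Xf (K i : ℕ) : Measurable (Xf K i) := by
  have : Xf K i = Set.indicator {x | K ≤ cfa i x} (fun _ => (1:ℝ)) := by
    ext x; simp [Xf, Set.indicator]
  rw [this]
  exact (measurable_const.indicator (measurableSet_le measurable_const (measurable_cfa i)))

lemma measurable_Yf (K i : ℕ) : Measurable (Yf K i) := by
  have : Yf K i = (fun m : ℕ × ℕ × ℕ × ℕ =>
      ((K:ℝ)⁻¹ * ((m.2.2.1 : ℝ) + (m.2.2.2 : ℝ))) / ((m.2.2.1 : ℝ) * (K:ℝ)⁻¹ + (m.2.2.2 : ℝ)))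
      ∘ matF i := rfl
  rw [this]
  exact (measurable_of_countable _).comp (measurable_matF i)

lemma Xf_nonneg (K i : ℕ) (x : ℝ) : 0 ≤ Xf K i x := by
  rw [Xf]; split <;> norm_num

lemma Xf_le_one (K i : ℕ) (x : ℝ) : Xf K i x ≤ 1 := by
  rw [Xf]; split <;> norm_num

lemma Yf_nonneg (K i : ℕ) (x : ℝ) : 0 ≤ Yf K i x := by
  rw [Yf]; positivity

lemma Yf_le_one {K : ℕ} (hK : 1 ≤ K) (i : ℕ) (x : ℝ) : Yf K i x ≤ 1 := by
  rw [Yf]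
  set C := ((matF i x).2.2.1 : ℝ) with hC
  set D := ((matF i x).2.2.2 : ℝ) with hD
  have hC0 : 0 ≤ C := by rw [hC]; positivity
  have hD0 : 0 ≤ D := by rw [hD]; positivity
  have hs0 : (0:ℝ) < (K:ℝ)⁻¹ := by
    have : (0:ℝ) < (K:ℝ) := by exact_mod_cast hK
    positivity
  have hs1 : (K:ℝ)⁻¹ ≤ 1 := by
    apply inv_le_one_of_one_le₀; exact_mod_cast hK
  rcases eq_or_lt_of_le (by positivity : (0:ℝ) ≤ C * (K:ℝ)⁻¹ + D) with h | h
  · rw [div_eq_zero_iff.mpr]; norm_num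
    right; exact h.symm
  · rw [div_le_one h]
    nlinarith

lemma Yf_ge {K : ℕ} (hK : 1 ≤ K) (i : ℕ) {x : ℝ} (hx : x ∈ G) : (K:ℝ)⁻¹ ≤ Yf K i x := by
  rw [Yf]
  set C := ((matF i x).2.2.1 : ℝ) with hC
  set D := ((matF i x).2.2.2 : ℝ) with hD
  have hC0 : 0 ≤ C := by rw [hC]; positivity
  have hD1 : 1 ≤ D := by
    rw [hD]; exact_mod_cast one_le_mD (qlist_good hx i)
  have hs0 : (0:ℝ) < (K:ℝ)⁻¹ := by
    have : (0:ℝ) < (K:ℝ) := by exact_mod_cast hK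
    positivity
  have hs1 : (K:ℝ)⁻¹ ≤ 1 := by
    apply inv_le_one_of_one_le₀; exact_mod_cast hK
  have hden : 0 < C * (K:ℝ)⁻¹ + D := by nlinarith
  rw [le_div_iff₀ hden]
  nlinarith [mul_nonneg (mul_nonneg hs0.le hC0) (sub_nonneg.mpr hs1)]

lemma bdd_integrable {f : ℝ → ℝ} (hm : Measurable f) (C : ℝ) (h : ∀ x, |f x| ≤ C) :
    Integrable f μ := by
  refine ⟨hm.aestronglyMeasurable, HasFiniteIntegral.of_bounded (C := C) ?_⟩
  filter_upwards with x
  simpa using h x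

lemma integral_fiber (i : ℕ) {f : ℝ → ℝ} (hf : Integrable f μ) :
    ∫ x, f x ∂μ = ∑' l : List ℕ, ∫ x in {x | qlist i x = l}, f x ∂μ := by
  have hunion : (⋃ l : List ℕ, {x : ℝ | qlist i x = l}) = Set.univ := by
    ext x; simp only [Set.mem_iUnion, Set.mem_setOf_eq, Set.mem_univ, iff_true]
    exact ⟨qlist i x, rfl⟩
  have := MeasureTheory.integral_iUnion (μ := μ) (f := f)
    (s := fun l : List ℕ => {x | qlist i x = l})
    (fun l => fiber_measurable i l)
    (fun l₁ l₂ h => by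
      simp only [Function.onFun, Set.disjoint_left]
      intro x hx1 hx2
      exact h (hx1.symm.trans hx2))
    (by rw [hunion]; exact hf.integrableOn)
  rw [hunion] at this
  rw [← this, Measure.restrict_univ]

end CFAux6

namespace CFAux7
open CFAux CFAux2 CFAux3 CFAux4 CFAux5 CFAux6

lemma cfa_iff_mem {K : ℕ} (hK : 1 ≤ K) (i : ℕ) {x : ℝ} (hx : x ∈ G) :
    K ≤ cfa i x ↔ gaussMap^[i] x ∈ Set.uIoo (0:ℝ) ((K:ℝ)⁻¹) := by
  have hyG : gaussMap^[i] x ∈ G := iterate_mem_G hx i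
  set y := gaussMap^[i] x with hy
  have hy0 : 0 < y := hyG.2.1
  have hK0 : (0:ℝ) < (K:ℝ) := by exact_mod_cast hK
  have hs0 : (0:ℝ) < (K:ℝ)⁻¹ := by positivity
  rw [cfa_eq_iterate, ← hy, Set.uIoo_of_le hs0.le]
  rw [Nat.le_floor_iff (by positivity)]
  constructor
  · intro h
    refine ⟨hy0, lt_of_le_of_ne ?_ ?_⟩
    · have := inv_anti₀ hK0 h
      rwa [inv_inv] at this
    · intro hh
      exact hyG.1 ⟨(K:ℚ)⁻¹, by rw [hh]; push_cast; ring⟩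
  · rintro ⟨_, h2⟩
    have := inv_anti₀ hy0 h2.le
    rwa [inv_inv] at this

lemma fiber_inter_G {i : ℕ} {l : List ℕ} (hlen : l.length = i) :
    {x : ℝ | qlist i x = l} ∩ G
      = {x | x ∈ G ∧ qlist l.length x = l ∧ gaussMap^[l.length] x ∈ Set.uIoo (0:ℝ) 1} := by
  subst hlen
  ext x
  simp only [Set.mem_inter_iff, Set.mem_setOf_eq]
  constructor
  · rintro ⟨h1, h2⟩
    refine ⟨h2, h1, ?_⟩
    rw [Set.uIoo_of_le (by norm_num : (0:ℝ) ≤ 1)]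
    exact (iterate_mem_G h2 l.length).2
  · rintro ⟨h1, h2, _⟩
    exact ⟨h2, h1⟩

lemma fiber_inter_G_X {K i : ℕ} (hK : 1 ≤ K) {l : List ℕ} (hlen : l.length = i) :
    {x : ℝ | qlist i x = l} ∩ {x | K ≤ cfa i x} ∩ G
      = {x | x ∈ G ∧ qlist l.length x = l ∧
          gaussMap^[l.length] x ∈ Set.uIoo (0:ℝ) ((K:ℝ)⁻¹)} := by
  subst hlen
  ext x
  simp only [Set.mem_inter_iff, Set.mem_setOf_eq]
  constructor
  · rintro ⟨⟨h1, h2⟩, h3⟩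
    exact ⟨h3, h1, (cfa_iff_mem hK l.length h3).mp h2⟩
  · rintro ⟨h1, h2, h3⟩
    exact ⟨⟨h2, (cfa_iff_mem hK l.length h1).mpr h3⟩, h1⟩

/-- The orthogonality / exact conditional expectation lemma. -/
lemma orth {K i : ℕ} (hK : 1 ≤ K) {g : ℝ → ℝ} (hgm : Measurable g) {Cb : ℝ}
    (hgb : ∀ x, |g x| ≤ Cb) (hfac : ∀ x y, qlist i x = qlist i y → g x = g y) :
    ∫ x, (Xf K i x - Yf K i x) * g x ∂μ = 0 := by
  have hK0 : (0:ℝ) < (K:ℝ) := by exact_mod_cast hK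
  have hs0 : (0:ℝ) < (K:ℝ)⁻¹ := by positivity
  have hs1 : ((K:ℝ)⁻¹) ≤ 1 := by
    apply inv_le_one_of_one_le₀; exact_mod_cast hK
  have hFm : Measurable (fun x => (Xf K i x - Yf K i x) * g x) :=
    ((measurable_Xf K i).sub (measurable_Yf K i)).mul hgm
  have hFb : ∀ x, |(Xf K i x - Yf K i x) * g x| ≤ 1 * |Cb| := by
    intro x
    rw [abs_mul]
    apply mul_le_mul
    · rw [abs_sub_le_iff]
      constructor
      · linarith [Xf_le_one K i x, Yf_nonneg K i x]
      · linarith [Xf_nonneg K i x, Yf_le_one hK i x]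
    · exact le_trans (hgb x) (le_abs_self Cb)
    · exact abs_nonneg _
    · norm_num
  have hFi : Integrable (fun x => (Xf K i x - Yf K i x) * g x) μ :=
    bdd_integrable hFm _ hFb
  rw [integral_fiber i hFi]
  have hzero : ∀ l : List ℕ,
      ∫ x in {x : ℝ | qlist i x = l}, (Xf K i x - Yf K i x) * g x ∂μ = 0 := by
    intro l
    by_cases hgood : l.length = i ∧ goodList l
    · obtain ⟨hlen, hl⟩ := hgood
      by_cases hne : Set.Nonempty {x : ℝ | qlist i x = l}
      · obtain ⟨x₀, hx₀⟩ := hne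
        have hx₀' : qlist i x₀ = l := hx₀
        set s : ℝ := (K:ℝ)⁻¹ with hs_def
        set C : ℝ := ((mat l).2.2.1 : ℝ) with hC_def
        set D : ℝ := ((mat l).2.2.2 : ℝ) with hD_def
        have hC0 : 0 ≤ C := Nat.cast_nonneg _
        have hD1 : 1 ≤ D := by rw [hD_def]; exact_mod_cast one_le_mD hl
        have e3 : 0 < D := by linarith
        have e1 : 0 < C * s + D := by nlinarith
        have e2 : 0 < C + D := by linarith
        have hY0 : Yf K i x₀ = s * (C + D) / (C * s + D) := by
          rw [Yf, matF, hx₀']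
        have hμG : μ {x : ℝ | qlist i x = l} = μ ({x : ℝ | qlist i x = l} ∩ G) :=
          (measure_inter_conull (s := {x : ℝ | qlist i x = l}) G_compl_null).symm
        have hμfib : μ {x : ℝ | qlist i x = l} = ENNReal.ofReal (1 / (D * (C + D))) := by
          rw [hμG, fiber_inter_G hlen,
            mu_cylinder l hl (by norm_num : (0:ℝ) ∈ Set.Icc (0:ℝ) 1)
              (by norm_num : (1:ℝ) ∈ Set.Icc (0:ℝ) 1)]
          congr 1
          rw [← hC_def, ← hD_def]
          norm_num
        have hμXG : μ ({x : ℝ | qlist i x = l} ∩ {x | K ≤ cfa i x})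
            = μ ({x : ℝ | qlist i x = l} ∩ {x | K ≤ cfa i x} ∩ G) :=
          (measure_inter_conull G_compl_null).symm
        have hμX : μ ({x : ℝ | qlist i x = l} ∩ {x | K ≤ cfa i x})
            = ENNReal.ofReal (s / (D * (C * s + D))) := by
          rw [hμXG, fiber_inter_G_X hK hlen,
            mu_cylinder l hl (by norm_num : (0:ℝ) ∈ Set.Icc (0:ℝ) 1)
              (⟨hs0.le, hs1⟩ : (K:ℝ)⁻¹ ∈ Set.Icc (0:ℝ) 1)]
          congr 1
          rw [← hC_def, ← hD_def, ← hs_def]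
          rw [abs_of_nonpos (by linarith : (0:ℝ) - s ≤ 0)]
          rw [mul_zero, zero_add]
          ring
        have hcongr : ∫ x in {x : ℝ | qlist i x = l}, (Xf K i x - Yf K i x) * g x ∂μ
            = ∫ x in {x : ℝ | qlist i x = l}, (Xf K i x - Yf K i x₀) * g x₀ ∂μ := by
          apply setIntegral_congr_fun (fiber_measurable i l)
          intro x hx
          have hx' : qlist i x = l := hx
          have h1 : g x = g x₀ := hfac x x₀ (by rw [hx', hx₀'])
          have h2 : Yf K i x = Yf K i x₀ := by rw [Yf, Yf, matF, matF, hx', hx₀']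
          simp only []
          rw [h1, h2]
        have hXmeas : MeasurableSet {x : ℝ | K ≤ cfa i x} :=
          measurableSet_le measurable_const (measurable_cfa i)
        have hXval : ∫ x in {x : ℝ | qlist i x = l}, Xf K i x ∂μ
            = (μ ({x : ℝ | qlist i x = l} ∩ {x | K ≤ cfa i x})).toReal := by
          have hXi : Xf K i = Set.indicator {x : ℝ | K ≤ cfa i x} (fun _ => (1:ℝ)) := by
            ext x; simp [Xf, Set.indicator]
          rw [hXi, setIntegral_indicator hXmeas, setIntegral_const]
          simp
          rfl
        have hXint : IntegrableOn (Xf K i) {x : ℝ | qlist i x = l} μ :=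
          (bdd_integrable (measurable_Xf K i) 1 (fun x =>
            abs_le.mpr ⟨by linarith [Xf_nonneg K i x], Xf_le_one K i x⟩)).integrableOn
        rw [hcongr, integral_mul_const]
        apply mul_eq_zero_of_left
        rw [integral_sub hXint ((integrable_const _).integrableOn)]
        rw [hXval, setIntegral_const, measureReal_def, hμfib, hμX, hY0]
        rw [ENNReal.toReal_ofReal (by positivity), ENNReal.toReal_ofReal (by positivity)]
        rw [smul_eq_mul]
        field_simp
        ring
      · rw [Set.not_nonempty_iff_eq_empty.mp hne, Measure.restrict_empty,
          integral_zero_measure]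
    · have hμ0 : μ {x : ℝ | qlist i x = l} = 0 := by
        rw [(measure_inter_conull (s := {x : ℝ | qlist i x = l}) G_compl_null).symm]
        have hempty : {x : ℝ | qlist i x = l} ∩ G = ∅ := by
          ext x
          simp only [Set.mem_inter_iff, Set.mem_setOf_eq, Set.mem_empty_iff_false, iff_false]
          rintro ⟨h1, h2⟩
          apply hgood
          refine ⟨by rw [← h1, qlist_length], ?_⟩
          rw [← h1]; exact qlist_good h2 i
        rw [hempty]; exact measure_empty
      rw [Measure.restrict_eq_zero.mpr hμ0, integral_zero_measure]
  rw [tsum_congr hzero, tsum_zero]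
end CFAux7

namespace CFAux8
open CFAux CFAux2 CFAux3 CFAux4 CFAux5 CFAux6 CFAux7

noncomputable def Df (K i : ℕ) (x : ℝ) : ℝ := Xf K i x - Yf K i x
noncomputable def Mf (K n : ℕ) (x : ℝ) : ℝ := ∑ i ∈ Finset.range n, Df K i x

lemma measurable_Df (K i : ℕ) : Measurable (Df K i) :=
  (measurable_Xf K i).sub (measurable_Yf K i)

lemma measurable_Mf (K n : ℕ) : Measurable (Mf K n) := by
  unfold Mf
  exact Finset.measurable_sum _ (fun i _ => measurable_Df K i)

lemma Df_abs_le {K : ℕ} (hK : 1 ≤ K) (i : ℕ) (x : ℝ) : |Df K i x| ≤ 1 := by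
  rw [Df, abs_sub_le_iff]
  constructor
  · linarith [Xf_le_one K i x, Yf_nonneg K i x]
  · linarith [Xf_nonneg K i x, Yf_le_one hK i x]

lemma Mf_abs_le {K : ℕ} (hK : 1 ≤ K) (n : ℕ) (x : ℝ) : |Mf K n x| ≤ n := by
  rw [Mf]
  calc |∑ i ∈ Finset.range n, Df K i x| ≤ ∑ i ∈ Finset.range n, |Df K i x| :=
        Finset.abs_sum_le_sum_abs _ _
  _ ≤ ∑ i ∈ Finset.range n, 1 := Finset.sum_le_sum (fun i _ => Df_abs_le hK i x)
  _ = n := by simp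

lemma Mf_succ (K n : ℕ) (x : ℝ) : Mf K (n+1) x = Mf K n x + Df K n x := by
  rw [Mf, Finset.sum_range_succ]; rfl

lemma Mf_fac (K n : ℕ) {x y : ℝ} (h : qlist n x = qlist n y) : Mf K n x = Mf K n y := by
  rw [Mf, Mf]
  apply Finset.sum_congr rfl
  intro i hi
  have hi' : i < n := Finset.mem_range.mp hi
  have h1 : qlist (i+1) x = qlist (i+1) y := by
    rw [qlist_take (i+1) n hi', qlist_take (i+1) n hi', h]
  have hXeq : Xf K i x = Xf K i y := by
    rw [Xf, Xf, cfa_of_qlist (Nat.lt_succ_self i) h1]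
  have hqi : qlist i x = qlist i y := by
    rw [qlist_take i (i+1) (Nat.le_succ i), qlist_take i (i+1) (Nat.le_succ i), h1]
  have hYeq : Yf K i x = Yf K i y := by rw [Yf, Yf, matF, matF, hqi]
  rw [Df, Df, hXeq, hYeq]

/-- second moment bound -/
lemma V2 {K : ℕ} (hK : 1 ≤ K) (n : ℕ) : ∫ x, (Mf K n x)^2 ∂μ ≤ n := by
  induction n with
  | zero => simp [Mf]
  | succ n ih =>
      have hIa : Integrable (fun x => (Mf K n x)^2) μ :=
        bdd_integrable ((measurable_Mf K n).pow_const 2) ((n:ℝ)^2) (fun x => by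
          rw [abs_pow]
          exact pow_le_pow_left₀ (abs_nonneg _) (Mf_abs_le hK n x) 2)
      have hbnd : ∀ x, |(Xf K n x - Yf K n x) * (2 * Mf K n x)| ≤ 1 * (2 * n) := by
        intro x
        rw [abs_mul]
        apply mul_le_mul
        · exact Df_abs_le hK n x
        · rw [abs_mul, abs_two]
          exact mul_le_mul_of_nonneg_left (Mf_abs_le hK n x) (by norm_num)
        · exact abs_nonneg _
        · norm_num
      have hIc : Integrable (fun x => (Xf K n x - Yf K n x) * (2 * Mf K n x)) μ :=
        bdd_integrable (((measurable_Xf K n).sub (measurable_Yf K n)).mul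
          (measurable_const.mul (measurable_Mf K n))) (1 * (2 * n)) hbnd
      have hId : Integrable (fun x => (Df K n x)^2) μ :=
        bdd_integrable ((measurable_Df K n).pow_const 2) 1 (fun x => by
          rw [abs_pow]
          calc |Df K n x|^2 ≤ 1^2 := pow_le_pow_left₀ (abs_nonneg _) (Df_abs_le hK n x) 2
          _ = 1 := one_pow 2)
      have key : (fun x => (Mf K (n+1) x)^2) = fun x =>
          (Mf K n x)^2 + ((Xf K n x - Yf K n x) * (2 * Mf K n x) + (Df K n x)^2) := by
        funext x; rw [Mf_succ, Df]; ring
      have hIcd : Integrable (fun x => (Xf K n x - Yf K n x) * (2 * Mf K n x) + Df K n x ^ 2) μ :=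
        hIc.add hId
      rw [key, integral_add hIa hIcd, integral_add hIc hId]
      have hgb : ∀ x, |2 * Mf K n x| ≤ 2 * n := by
        intro x
        rw [abs_mul, abs_two]
        exact mul_le_mul_of_nonneg_left (Mf_abs_le hK n x) (by norm_num)
      have hzero : ∫ x, (Xf K n x - Yf K n x) * (2 * Mf K n x) ∂μ = 0 := by
        apply orth (g := fun x => 2 * Mf K n x) hK (measurable_const.mul (measurable_Mf K n)) hgb
        intro x y hxy
        rw [Mf_fac K n hxy]
      have hd2 : ∫ x, (Df K n x)^2 ∂μ ≤ 1 := by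
        calc ∫ x, (Df K n x)^2 ∂μ ≤ ∫ _x, (1:ℝ) ∂μ := by
              apply integral_mono hId (integrable_const 1)
              intro x
              calc (Df K n x)^2 = |Df K n x|^2 := (sq_abs _).symm
              _ ≤ 1^2 := pow_le_pow_left₀ (abs_nonneg _) (Df_abs_le hK n x) 2
              _ = 1 := one_pow 2
        _ = 1 := by simp
      push_cast
      linarith

end CFAux8

namespace CFAux9
open CFAux CFAux2 CFAux3 CFAux4 CFAux5 CFAux6 CFAux7 CFAux8

lemma integrable_Mf_pow {K : ℕ} (hK : 1 ≤ K) (n p : ℕ) :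
    Integrable (fun x => (Mf K n x)^p) μ := by
  apply bdd_integrable ((measurable_Mf K n).pow_const p) ((n:ℝ)^p)
  intro x
  rw [abs_pow]
  exact pow_le_pow_left₀ (abs_nonneg _) (Mf_abs_le hK n x) p

/-- fourth moment bound -/
lemma V4 {K : ℕ} (hK : 1 ≤ K) (n : ℕ) : ∫ x, (Mf K n x)^4 ∂μ ≤ 6 * n^2 := by
  induction n with
  | zero => simp [Mf]
  | succ n ih =>
      have hMa := Mf_abs_le hK n
      have hDa := Df_abs_le hK n
      have hIt1 : Integrable (fun x => (Mf K n x)^4) μ := integrable_Mf_pow hK n 4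
      have hb2 : ∀ x, |(Xf K n x - Yf K n x) * (4 * (Mf K n x)^3)| ≤ 1 * (4 * (n:ℝ)^3) := by
        intro x
        rw [abs_mul]
        apply mul_le_mul (hDa x) _ (abs_nonneg _) (by norm_num)
        rw [abs_mul, abs_pow]
        have h4 : |(4:ℝ)| = 4 := by norm_num
        rw [h4]
        exact mul_le_mul_of_nonneg_left (pow_le_pow_left₀ (abs_nonneg _) (hMa x) 3) (by norm_num)
      have hIt2 : Integrable (fun x => (Xf K n x - Yf K n x) * (4 * (Mf K n x)^3)) μ :=
        bdd_integrable (((measurable_Xf K n).sub (measurable_Yf K n)).mul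
          (measurable_const.mul ((measurable_Mf K n).pow_const 3))) _ hb2
      have hb3 : ∀ x, |6 * (Mf K n x)^2 * (Df K n x)^2| ≤ 6 * (n:ℝ)^2 := by
        intro x
        rw [abs_mul, abs_mul, abs_pow, abs_pow]
        have h6 : |(6:ℝ)| = 6 := by norm_num
        rw [h6]
        have h1 : |Mf K n x|^2 ≤ (n:ℝ)^2 := pow_le_pow_left₀ (abs_nonneg _) (hMa x) 2
        have h2 : |Df K n x|^2 ≤ 1 := by
          calc |Df K n x|^2 ≤ 1^2 := pow_le_pow_left₀ (abs_nonneg _) (hDa x) 2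
          _ = 1 := one_pow 2
        nlinarith [abs_nonneg (Mf K n x), abs_nonneg (Df K n x), sq_nonneg (|Mf K n x|)]
      have hIt3 : Integrable (fun x => 6 * (Mf K n x)^2 * (Df K n x)^2) μ :=
        bdd_integrable ((measurable_const.mul ((measurable_Mf K n).pow_const 2)).mul
          ((measurable_Df K n).pow_const 2)) _ hb3
      have hb4 : ∀ x, |4 * (Mf K n x * (Df K n x)^3)| ≤ 4 * (n:ℝ) := by
        intro x
        rw [abs_mul, abs_mul, abs_pow]
        have h4 : |(4:ℝ)| = 4 := by norm_num
        rw [h4]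
        have h2 : |Df K n x|^3 ≤ 1 := by
          calc |Df K n x|^3 ≤ 1^3 := pow_le_pow_left₀ (abs_nonneg _) (hDa x) 3
          _ = 1 := one_pow 3
        nlinarith [abs_nonneg (Mf K n x), hMa x, pow_nonneg (abs_nonneg (Df K n x)) 3]
      have hIt4 : Integrable (fun x => 4 * (Mf K n x * (Df K n x)^3)) μ :=
        bdd_integrable (measurable_const.mul ((measurable_Mf K n).mul
          ((measurable_Df K n).pow_const 3))) _ hb4
      have hb5 : ∀ x, |(Df K n x)^4| ≤ 1 := by
        intro x
        rw [abs_pow]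
        calc |Df K n x|^4 ≤ 1^4 := pow_le_pow_left₀ (abs_nonneg _) (hDa x) 4
        _ = 1 := one_pow 4
      have hIt5 : Integrable (fun x => (Df K n x)^4) μ :=
        bdd_integrable ((measurable_Df K n).pow_const 4) _ hb5
      have key : (fun x => (Mf K (n+1) x)^4) = fun x =>
          (Mf K n x)^4 + ((Xf K n x - Yf K n x) * (4 * (Mf K n x)^3) +
            (6 * (Mf K n x)^2 * (Df K n x)^2 + (4 * (Mf K n x * (Df K n x)^3) +
              (Df K n x)^4))) := by
        funext x
        rw [Mf_succ]
        have hdd : Df K n x = Xf K n x - Yf K n x := rfl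
        rw [← hdd]
        ring
      have hI45 : Integrable (fun x => 4 * (Mf K n x * (Df K n x)^3) + (Df K n x)^4) μ :=
        hIt4.add hIt5
      have hI345 : Integrable (fun x => 6 * (Mf K n x)^2 * (Df K n x)^2 +
          (4 * (Mf K n x * (Df K n x)^3) + (Df K n x)^4)) μ := hIt3.add hI45
      have hI2345 : Integrable (fun x => (Xf K n x - Yf K n x) * (4 * (Mf K n x)^3) +
          (6 * (Mf K n x)^2 * (Df K n x)^2 + (4 * (Mf K n x * (Df K n x)^3) +
            (Df K n x)^4))) μ := hIt2.add hI345
      rw [key, integral_add hIt1 hI2345, integral_add hIt2 hI345, integral_add hIt3 hI45,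
        integral_add hIt4 hIt5]
      have hzero : ∫ x, (Xf K n x - Yf K n x) * (4 * (Mf K n x)^3) ∂μ = 0 := by
        apply orth (g := fun x => 4 * (Mf K n x)^3) hK (measurable_const.mul ((measurable_Mf K n).pow_const 3))
          (Cb := 4 * (n:ℝ)^3)
        · intro x
          rw [abs_mul, abs_pow]
          have h4 : |(4:ℝ)| = 4 := by norm_num
          rw [h4]
          exact mul_le_mul_of_nonneg_left (pow_le_pow_left₀ (abs_nonneg _) (hMa x) 3) (by norm_num)
        · intro x y hxy
          rw [Mf_fac K n hxy]
      have h3le : ∫ x, 6 * (Mf K n x)^2 * (Df K n x)^2 ∂μ ≤ 6 * (n:ℝ) := by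
        calc ∫ x, 6 * (Mf K n x)^2 * (Df K n x)^2 ∂μ ≤ ∫ x, 6 * (Mf K n x)^2 ∂μ := by
              apply integral_mono hIt3 ((integrable_Mf_pow hK n 2).const_mul 6)
              intro x
              show 6 * (Mf K n x)^2 * (Df K n x)^2 ≤ 6 * (Mf K n x)^2
              have h2 : (Df K n x)^2 ≤ 1 := by
                calc (Df K n x)^2 = |Df K n x|^2 := (sq_abs _).symm
                _ ≤ 1^2 := pow_le_pow_left₀ (abs_nonneg _) (hDa x) 2
                _ = 1 := one_pow 2
              have h6 : (0:ℝ) ≤ 6 * (Mf K n x)^2 := by positivity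
              have := mul_le_mul_of_nonneg_left h2 h6
              nlinarith [this]
        _ = 6 * ∫ x, (Mf K n x)^2 ∂μ := by rw [integral_const_mul]
        _ ≤ 6 * (n:ℝ) := by
              have := V2 hK n
              linarith
      have h4le : ∫ x, 4 * (Mf K n x * (Df K n x)^3) ∂μ ≤ 4 * (n:ℝ) := by
        calc ∫ x, 4 * (Mf K n x * (Df K n x)^3) ∂μ ≤ ∫ _x, 4 * (n:ℝ) ∂μ := by
              apply integral_mono hIt4 (integrable_const _)
              intro x
              show 4 * (Mf K n x * (Df K n x)^3) ≤ 4 * (n:ℝ)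
              exact le_of_abs_le (hb4 x)
        _ = 4 * (n:ℝ) := by simp
      have h5le : ∫ x, (Df K n x)^4 ∂μ ≤ 1 := by
        calc ∫ x, (Df K n x)^4 ∂μ ≤ ∫ _x, (1:ℝ) ∂μ := by
              apply integral_mono hIt5 (integrable_const _)
              intro x
              show (Df K n x)^4 ≤ 1
              exact le_of_abs_le (hb5 x)
        _ = 1 := by simp
      push_cast
      nlinarith [ih]

end CFAux9

namespace CFAux10
open CFAux CFAux2 CFAux3 CFAux4 CFAux5 CFAux6 CFAux7 CFAux8 CFAux9

lemma meas_bad {K : ℕ} (hK : 1 ≤ K) (j n : ℕ) :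
    μ {x | (((n:ℝ)+1) / ((j:ℝ)+1))^4 ≤ (Mf K (n+1) x)^4}
      ≤ ENNReal.ofReal (6 * ((j:ℝ)+1)^4 / ((n:ℝ)+1)^2) := by
  set ε : ℝ := (((n:ℝ)+1) / ((j:ℝ)+1))^4 with hε
  have hε0 : 0 < ε := by positivity
  have hint : Integrable (fun x => (Mf K (n+1) x)^4) μ := integrable_Mf_pow hK (n+1) 4
  have hnn : 0 ≤ᶠ[ae μ] fun x => (Mf K (n+1) x)^4 := by
    filter_upwards with x
    positivity
  have hcheb := mul_meas_ge_le_integral_of_nonneg hnn hint ε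
  have hV := V4 hK (n+1)
  push_cast at hV
  have hfin : μ {x | ε ≤ (Mf K (n+1) x)^4} ≠ ⊤ := measure_ne_top μ _
  rw [ENNReal.le_ofReal_iff_toReal_le hfin (by positivity)]
  have ht0 : 0 ≤ (μ {x | ε ≤ (Mf K (n+1) x)^4}).toReal := ENNReal.toReal_nonneg
  have h2 : (μ {x | ε ≤ (Mf K (n+1) x)^4}).toReal ≤ 6*((n:ℝ)+1)^2 / ε := by
    rw [le_div_iff₀ hε0]
    calc (μ {x | ε ≤ (Mf K (n+1) x)^4}).toReal * ε
        = ε * (μ {x | ε ≤ (Mf K (n+1) x)^4}).toReal := mul_comm _ _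
    _ ≤ ∫ x, (Mf K (n+1) x)^4 ∂μ := hcheb
    _ ≤ 6*((n:ℝ)+1)^2 := hV
  have heq : 6*((n:ℝ)+1)^2 / ε = 6 * ((j:ℝ)+1)^4 / ((n:ℝ)+1)^2 := by
    rw [hε, div_pow]
    have hn1 : ((n:ℝ)+1) ≠ 0 := by positivity
    have hj1 : ((j:ℝ)+1) ≠ 0 := by positivity
    field_simp
  rw [← heq]
  exact h2

lemma ae_eventually {K : ℕ} (hK : 1 ≤ K) (j : ℕ) :
    ∀ᵐ x ∂μ, ∀ᶠ n in atTop, |Mf K (n+1) x| < ((n:ℝ)+1)/((j:ℝ)+1) := by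
  set s : ℕ → Set ℝ := fun n => {x | (((n:ℝ)+1) / ((j:ℝ)+1))^4 ≤ (Mf K (n+1) x)^4} with hs
  have hsum : Summable (fun n : ℕ => 6 * ((j:ℝ)+1)^4 / ((n:ℝ)+1)^2) := by
    have h1 : Summable (fun n : ℕ => 1 / ((n:ℝ)+1)^2) := by
      have h := (summable_nat_add_iff 1).mpr
        (Real.summable_one_div_nat_pow.mpr (by norm_num : 1 < 2))
      simpa using h
    have := h1.mul_left (6 * ((j:ℝ)+1)^4)
    simpa [div_eq_mul_inv, one_div, mul_assoc] using this
  have htsum : ∑' n, μ (s n) ≠ ⊤ := by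
    apply ne_top_of_le_ne_top (b := ∑' (n : ℕ), ENNReal.ofReal (6 * ((j:ℝ)+1)^4 / ((n:ℝ)+1)^2))
    · rw [← ENNReal.ofReal_tsum_of_nonneg (fun n => by positivity) hsum]
      exact ENNReal.ofReal_ne_top
    · exact ENNReal.tsum_le_tsum (fun n => meas_bad hK j n)
  have h := ae_eventually_notMem htsum
  filter_upwards [h] with x hx
  filter_upwards [hx] with n hn
  by_contra hcon
  push_neg at hcon
  apply hn
  rw [hs]
  simp only [Set.mem_setOf_eq]
  calc (((n:ℝ)+1) / ((j:ℝ)+1))^4 ≤ |Mf K (n+1) x|^4 :=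
        pow_le_pow_left₀ (by positivity) hcon 4
  _ = (Mf K (n+1) x)^4 := by rw [← abs_pow, abs_of_nonneg (by positivity)]

lemma ae_tendsto {K : ℕ} (hK : 1 ≤ K) :
    ∀ᵐ x ∂μ, Tendsto (fun n : ℕ => Mf K n x / n) atTop (𝓝 0) := by
  have h := ae_all_iff.mpr (fun j : ℕ => ae_eventually hK j)
  filter_upwards [h] with x hx
  rw [NormedAddCommGroup.tendsto_nhds_zero]
  intro ε hε
  obtain ⟨j, hj⟩ := exists_nat_gt (1/ε)
  have hj1 : (0:ℝ) < (j:ℝ)+1 := by positivity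
  have hjε : 1/((j:ℝ)+1) < ε := by
    rw [div_lt_iff₀ hj1]
    have h1 : 1/ε * ε = 1 := by
      field_simp
    nlinarith [mul_lt_mul_of_pos_right hj hε]
  obtain ⟨N, hN⟩ := eventually_atTop.mp (hx j)
  refine eventually_atTop.2 ⟨N+1, fun m hm => ?_⟩
  obtain ⟨n, rfl⟩ : ∃ n, m = n + 1 := ⟨m - 1, by omega⟩
  have hNn : N ≤ n := by omega
  have hlt := hN n hNn
  have hn1 : (0:ℝ) < (n:ℝ)+1 := by positivity
  rw [Real.norm_eq_abs, abs_div]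
  have hcast : |((n+1 : ℕ) : ℝ)| = (n:ℝ)+1 := by
    rw [abs_of_pos (by positivity)]
    push_cast
    ring
  rw [hcast]
  calc |Mf K (n+1) x| / ((n:ℝ)+1) < (((n:ℝ)+1)/((j:ℝ)+1)) / ((n:ℝ)+1) := by gcongr
  _ = 1/((j:ℝ)+1) := by field_simp
  _ < ε := hjε

end CFAux10

section Final
open CFAux CFAux2 CFAux3 CFAux4 CFAux5 CFAux6 CFAux7 CFAux8 CFAux9 CFAux10

theorem average_partial_quotients_tendsto_atTop :
    ∀ᵐ x ∂(volume.restrict (Set.Ioo (0 : ℝ) 1)), Irrational x →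
      Tendsto (fun n : ℕ => (n : ℝ)⁻¹ * ∑ i ∈ Finset.range n, (cfa i x : ℝ))
        atTop atTop := by
  have hμ : ∀ᵐ x ∂μ, Irrational x →
      Tendsto (fun n : ℕ => (n : ℝ)⁻¹ * ∑ i ∈ Finset.range n, (cfa i x : ℝ))
        atTop atTop := by
    have hae := ae_all_iff.mpr (fun K : ℕ => ae_tendsto (K := K+1) (Nat.le_add_left 1 K))
    have hIoo : ∀ᵐ x ∂μ, x ∈ Set.Ioo (0:ℝ) 1 := ae_restrict_mem measurableSet_Ioo
    filter_upwards [hae, hIoo] with x hx hxIoo hirr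
    have hxG : x ∈ G := ⟨hirr, hxIoo⟩
    rw [tendsto_atTop]
    intro b
    obtain ⟨M, hM⟩ : ∃ M : ℕ, b + 1 ≤ ∑ K ∈ Finset.range M, 1/((K:ℝ)+1) :=
      (tendsto_atTop.mp Real.tendsto_sum_range_one_div_nat_succ_atTop (b+1)).exists
    have hEt : Tendsto (fun n : ℕ => ∑ K ∈ Finset.range M, Mf (K+1) n x / n)
        atTop (𝓝 0) := by
      have h0 := tendsto_finset_sum (Finset.range M) (fun K (_ : K ∈ Finset.range M) => hx K)
      simpa using h0
    have hEev := NormedAddCommGroup.tendsto_nhds_zero.mp hEt 1 one_pos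
    filter_upwards [hEev, eventually_ge_atTop 1] with n hE1 hn1
    have hn0 : (0:ℝ) < n := by exact_mod_cast hn1
    have hperK : ∀ K ∈ Finset.range M,
        1/((K:ℝ)+1) + Mf (K+1) n x / n ≤ (n:ℝ)⁻¹ * ∑ i ∈ Finset.range n, Xf (K+1) i x := by
      intro K _
      have hXsum : ∑ i ∈ Finset.range n, Xf (K+1) i x
          = Mf (K+1) n x + ∑ i ∈ Finset.range n, Yf (K+1) i x := by
        rw [Mf]
        simp only [Df]
        rw [Finset.sum_sub_distrib]
        ring
      have hYb : (n:ℝ) * ((K:ℝ)+1)⁻¹ ≤ ∑ i ∈ Finset.range n, Yf (K+1) i x := by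
        have hstep : ∀ i ∈ Finset.range n, ((K:ℝ)+1)⁻¹ ≤ Yf (K+1) i x := by
          intro i _
          have := Yf_ge (K := K+1) (Nat.le_add_left 1 K) i hxG
          have hc : (((K+1 : ℕ)):ℝ)⁻¹ = ((K:ℝ)+1)⁻¹ := by push_cast; ring_nf
          rwa [hc] at this
        calc (n:ℝ) * ((K:ℝ)+1)⁻¹ = ∑ _i ∈ Finset.range n, ((K:ℝ)+1)⁻¹ := by
              rw [Finset.sum_const, Finset.card_range, nsmul_eq_mul]
        _ ≤ ∑ i ∈ Finset.range n, Yf (K+1) i x := Finset.sum_le_sum hstep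
      rw [hXsum, mul_add]
      have h1 : Mf (K+1) n x / n = (n:ℝ)⁻¹ * Mf (K+1) n x := by
        rw [div_eq_inv_mul]
      have h2 : (n:ℝ)⁻¹ * ((n:ℝ) * ((K:ℝ)+1)⁻¹) ≤ (n:ℝ)⁻¹ * ∑ i ∈ Finset.range n, Yf (K+1) i x :=
        mul_le_mul_of_nonneg_left hYb (by positivity)
      have h3 : (n:ℝ)⁻¹ * ((n:ℝ) * ((K:ℝ)+1)⁻¹) = ((K:ℝ)+1)⁻¹ := by
        rw [← mul_assoc, inv_mul_cancel₀ (ne_of_gt hn0), one_mul]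
      rw [h3] at h2
      rw [h1]
      have h4 : 1/((K:ℝ)+1) = ((K:ℝ)+1)⁻¹ := one_div _
      linarith
    have hstep1 : ∀ i ∈ Finset.range n,
        ∑ K ∈ Finset.range M, Xf (K+1) i x ≤ (cfa i x : ℝ) := by
      intro i _
      have hcard : ∑ K ∈ Finset.range M, Xf (K+1) i x
          = (((Finset.range M).filter (fun K => K+1 ≤ cfa i x)).card : ℝ) := by
        simp only [Xf]
        rw [Finset.sum_boole]
      have hsub : (Finset.range M).filter (fun K => K+1 ≤ cfa i x) ⊆ Finset.range (cfa i x) := by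
        intro K hK
        simp only [Finset.mem_filter, Finset.mem_range] at hK ⊢
        omega
      rw [hcard]
      have := Finset.card_le_card hsub
      rw [Finset.card_range] at this
      exact_mod_cast this
    calc b = (b+1) + (-1) := by ring
    _ ≤ (∑ K ∈ Finset.range M, 1/((K:ℝ)+1)) + ∑ K ∈ Finset.range M, Mf (K+1) n x / n := by
        have habs : |∑ K ∈ Finset.range M, Mf (K+1) n x / n| < 1 := by
          simpa [Real.norm_eq_abs] using hE1
        have hE2 := (abs_lt.mp habs).1
        exact add_le_add hM (le_of_lt hE2)
    _ = ∑ K ∈ Finset.range M, (1/((K:ℝ)+1) + Mf (K+1) n x / n) := Finset.sum_add_distrib.symm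
    _ ≤ ∑ K ∈ Finset.range M, (n:ℝ)⁻¹ * ∑ i ∈ Finset.range n, Xf (K+1) i x :=
        Finset.sum_le_sum hperK
    _ = (n:ℝ)⁻¹ * ∑ K ∈ Finset.range M, ∑ i ∈ Finset.range n, Xf (K+1) i x := by
        rw [← Finset.mul_sum]
    _ = (n:ℝ)⁻¹ * ∑ i ∈ Finset.range n, ∑ K ∈ Finset.range M, Xf (K+1) i x := by
        rw [Finset.sum_comm]
    _ ≤ (n:ℝ)⁻¹ * ∑ i ∈ Finset.range n, (cfa i x : ℝ) :=
        mul_le_mul_of_nonneg_left (Finset.sum_le_sum hstep1) (by positivity)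
  exact hμ

end Final
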